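/- arXiv:2408.07697 — 5 statements merged into one kernel-verified Lean document; each statement's English description precedes it below -/
import Mathlib

section
/- Let P1, P2 be propositional normal logic programs such that no atom occurring in P1 appears as the head of a rule of P2 (stratified definition assumption). Then M is an answer set of P1 ∪ P2 if and only if M = M1 ∪ M2 where M1 = M ∩ atoms(P1) is an answer set of P1 and M is an answer set of P2 ∪ fix(P1, M1), where fix(P1,M1) consists of the facts {a ← : a ∈ M1} together with the constraints {← a : a ∈ atoms(P1) \ M1}. -/
/-- A propositional normal rule: optional head (none = constraint),
positive body atoms, negative body atoms. -/
structure Rule (A : Type) where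
  head : Option A
  pos : Set A
  neg : Set A

/-- The body of a rule is true in interpretation `M`. -/
def Rule.bodyTrue {A : Type} (r : Rule A) (M : Set A) : Prop :=
  r.pos ⊆ M ∧ ∀ a ∈ r.neg, a ∉ M

/-- A rule is satisfied by `M`. -/
def Rule.sat {A : Type} (r : Rule A) (M : Set A) : Prop :=
  r.bodyTrue M → ∃ a, r.head = some a ∧ a ∈ M

/-- `M` is a model of program `P`. -/
def isModel {A : Type} (P : Set (Rule A)) (M : Set A) : Prop :=
  ∀ r ∈ P, r.sat M

/-- The (GL/FLP) reduct of `P` w.r.t. `M`: keep rules whose negative body is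
disjoint from `M`, deleting the negative literals. -/
def reduct {A : Type} (P : Set (Rule A)) (M : Set A) : Set (Rule A) :=
  {r' | ∃ r ∈ P, (∀ a ∈ r.neg, a ∉ M) ∧ r' = ⟨r.head, r.pos, ∅⟩}

/-- `M` is an answer set (stable model) of `P`: it is the least model of the reduct. -/
def isAnswerSet {A : Type} (P : Set (Rule A)) (M : Set A) : Prop :=
  isModel (reduct P M) M ∧ ∀ N, isModel (reduct P M) N → M ⊆ N

/-- Atoms occurring in a rule. -/
def Rule.atoms {A : Type} (r : Rule A) : Set A :=
  {a | r.head = some a} ∪ r.pos ∪ r.neg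

/-- Atoms occurring in a program. -/
def progAtoms {A : Type} (P : Set (Rule A)) : Set A :=
  ⋃ r ∈ P, r.atoms

/-- Head atoms of a program. -/
def progHeads {A : Type} (P : Set (Rule A)) : Set A :=
  {a | ∃ r ∈ P, r.head = some a}

/-- The fact `a ←`. -/
def factRule {A : Type} (a : A) : Rule A := ⟨some a, ∅, ∅⟩

/-- The constraint `← a`. -/
def constraintRule {A : Type} (a : A) : Rule A := ⟨none, {a}, ∅⟩

/-- `fix(U, M)`: facts for the atoms of `U` in `M`, constraints for the atoms
of `U` not in `M`. -/
def fixProg {A : Type} (U : Set A) (M : Set A) : Set (Rule A) :=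
  {r | ∃ a ∈ M ∩ U, r = factRule a} ∪ {r | ∃ a ∈ U \ M, r = constraintRule a}

section Aux
variable {A : Type}

lemma reduct_union (P Q : Set (Rule A)) (M : Set A) :
    reduct (P ∪ Q) M = reduct P M ∪ reduct Q M := by
  ext r'
  constructor
  · rintro ⟨r, (h | h), hneg, rfl⟩
    · exact Or.inl ⟨r, h, hneg, rfl⟩
    · exact Or.inr ⟨r, h, hneg, rfl⟩
  · rintro (⟨r, h, hneg, rfl⟩ | ⟨r, h, hneg, rfl⟩)
    · exact ⟨r, Or.inl h, hneg, rfl⟩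
    · exact ⟨r, Or.inr h, hneg, rfl⟩

lemma reduct_fix (U W M : Set A) : reduct (fixProg U W) M = fixProg U W := by
  ext r'
  constructor
  · rintro ⟨r, (⟨a, ha, rfl⟩ | ⟨a, ha, rfl⟩), hneg, rfl⟩
    · exact Or.inl ⟨a, ha, rfl⟩
    · exact Or.inr ⟨a, ha, rfl⟩
  · rintro (⟨a, ha, rfl⟩ | ⟨a, ha, rfl⟩)
    · exact ⟨factRule a, Or.inl ⟨a, ha, rfl⟩, fun x hx => absurd hx (Set.notMem_empty x), rfl⟩
    · exact ⟨constraintRule a, Or.inr ⟨a, ha, rfl⟩, fun x hx => absurd hx (Set.notMem_empty x), rfl⟩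

lemma neg_subset_atoms {P : Set (Rule A)} {r : Rule A} (hr : r ∈ P) :
    r.neg ⊆ progAtoms P := fun a ha => by
  simp only [progAtoms, Set.mem_iUnion]
  exact ⟨r, hr, Or.inr ha⟩

lemma pos_subset_atoms {P : Set (Rule A)} {r : Rule A} (hr : r ∈ P) :
    r.pos ⊆ progAtoms P := fun a ha => by
  simp only [progAtoms, Set.mem_iUnion]
  exact ⟨r, hr, Or.inl (Or.inr ha)⟩

lemma head_mem_atoms {P : Set (Rule A)} {r : Rule A} {a : A} (hr : r ∈ P)
    (hh : r.head = some a) : a ∈ progAtoms P := by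
  simp only [progAtoms, Set.mem_iUnion]
  exact ⟨r, hr, Or.inl (Or.inl hh)⟩

lemma reduct_inter_atoms (P1 : Set (Rule A)) (M : Set A) :
    reduct P1 M = reduct P1 (M ∩ progAtoms P1) := by
  ext r'
  constructor
  · rintro ⟨r, hr, hneg, rfl⟩
    exact ⟨r, hr, fun a ha hm => hneg a ha hm.1, rfl⟩
  · rintro ⟨r, hr, hneg, rfl⟩
    exact ⟨r, hr, fun a ha hm => hneg a ha ⟨hm, neg_subset_atoms hr ha⟩, rfl⟩

end Aux

/-- Collapse lemma for two uniform plain subprograms (stratified definition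
assumption): if no atom of `P1` is a head of `P2`, then `M` is an answer set of
`P1 ∪ P2` iff `M1 = M ∩ atoms(P1)` is an answer set of `P1` and `M` is an
answer set of `P2 ∪ fix(P1, M1)`. -/
theorem union_answerSet_iff_fix {A : Type} (P1 P2 : Set (Rule A))
    (hstrat : progAtoms P1 ∩ progHeads P2 = ∅) (M : Set A) :
    isAnswerSet (P1 ∪ P2) M ↔
      (isAnswerSet P1 (M ∩ progAtoms P1) ∧
        isAnswerSet (P2 ∪ fixProg (progAtoms P1) (M ∩ progAtoms P1)) M) := by
  classical
  set U := progAtoms P1 with hU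
  set M1 := M ∩ U with hM1
  have hM1U : M1 ⊆ U := Set.inter_subset_right
  have hM1M : M1 ⊆ M := Set.inter_subset_left
  have headP2 : ∀ {r : Rule A} {a : A}, r ∈ P2 → r.head = some a → a ∉ U := by
    intro r a hr hh haU
    have : a ∈ progAtoms P1 ∩ progHeads P2 := ⟨haU, ⟨r, hr, hh⟩⟩
    rw [hstrat] at this
    exact this
  have hR1 : reduct P1 M = reduct P1 M1 := reduct_inter_atoms P1 M
  constructor
  · rintro ⟨hMmod, hMmin⟩
    rw [reduct_union] at hMmod hMmin
    have hMmodR1 : isModel (reduct P1 M) M := fun r hr => hMmod r (Or.inl hr)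
    have hMmodR2 : isModel (reduct P2 M) M := fun r hr => hMmod r (Or.inr hr)
    constructor
    · constructor
      · rw [← hR1]
        rintro r' ⟨r, hr, hneg, rfl⟩ ⟨hpos, -⟩
        obtain ⟨a, heq, haM⟩ := hMmodR1 _ ⟨r, hr, hneg, rfl⟩
          ⟨fun x hx => hM1M (hpos hx), fun x hx => absurd hx (Set.notMem_empty x)⟩
        exact ⟨a, heq, haM, head_mem_atoms hr heq⟩
      · intro N hN
        rw [← hR1] at hN
        have hmodel : isModel (reduct P1 M ∪ reduct P2 M) ((N ∩ M ∩ U) ∪ (M \ U)) := by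
          rintro r' (⟨r, hr, hneg, rfl⟩ | ⟨r, hr, hneg, rfl⟩) ⟨hpos, -⟩
          · have hposU : r.pos ⊆ U := pos_subset_atoms hr
            have hposN : r.pos ⊆ N ∩ M ∩ U := by
              intro x hx
              rcases hpos hx with h | h
              · exact h
              · exact absurd (hposU hx) h.2
            obtain ⟨a, heq, haN⟩ := hN _ ⟨r, hr, hneg, rfl⟩
              ⟨fun x hx => (hposN hx).1.1, fun x hx => absurd hx (Set.notMem_empty x)⟩
            obtain ⟨b, heq', hbM⟩ := hMmodR1 _ ⟨r, hr, hneg, rfl⟩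
              ⟨fun x hx => (hposN hx).1.2, fun x hx => absurd hx (Set.notMem_empty x)⟩
            have hab : a = b := by
              rw [heq] at heq'; exact Option.some_injective _ heq'.symm |>.symm
            subst hab
            exact ⟨a, heq, Or.inl ⟨⟨haN, hbM⟩, head_mem_atoms hr heq⟩⟩
          · have hsubM : ((N ∩ M ∩ U) ∪ (M \ U)) ⊆ M := by
              rintro x (h | h)
              · exact h.1.2
              · exact h.1
            obtain ⟨a, heq, haM⟩ := hMmodR2 _ ⟨r, hr, hneg, rfl⟩
              ⟨fun x hx => hsubM (hpos hx), fun x hx => absurd hx (Set.notMem_empty x)⟩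
            exact ⟨a, heq, Or.inr ⟨haM, headP2 hr heq⟩⟩
        intro a haM1
        rcases hMmin _ hmodel (hM1M haM1) with h | h
        · exact h.1.1
        · exact absurd haM1.2 h.2
    · unfold isAnswerSet
      rw [reduct_union, reduct_fix]
      constructor
      · rintro r' (hr' | hr')
        · exact hMmodR2 r' hr'
        · rcases hr' with ⟨a, ha, rfl⟩ | ⟨a, ha, rfl⟩
          · exact fun _ => ⟨a, rfl, hM1M ha.1⟩
          · rintro ⟨hpos, -⟩
            exact absurd (⟨hpos rfl, ha.1⟩ : a ∈ M1) ha.2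
      · intro N hN
        have hM1N : M1 ⊆ N := by
          intro a haM1
          obtain ⟨b, heq, hbN⟩ := hN (factRule a) (Or.inr (Or.inl ⟨a, ⟨haM1, hM1U haM1⟩, rfl⟩))
            ⟨Set.empty_subset N, fun x hx => absurd hx (Set.notMem_empty x)⟩
          cases Option.some_injective _ heq
          exact hbN
        have hmodel : isModel (reduct P1 M ∪ reduct P2 M) (N ∩ M) := by
          rintro r' (⟨r, hr, hneg, rfl⟩ | ⟨r, hr, hneg, rfl⟩) ⟨hpos, -⟩
          · obtain ⟨a, heq, haM⟩ := hMmodR1 _ ⟨r, hr, hneg, rfl⟩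
              ⟨fun x hx => (hpos hx).2, fun x hx => absurd hx (Set.notMem_empty x)⟩
            exact ⟨a, heq, hM1N ⟨haM, head_mem_atoms hr heq⟩, haM⟩
          · obtain ⟨a, heq, haN⟩ := hN _ (Or.inl ⟨r, hr, hneg, rfl⟩)
              ⟨fun x hx => (hpos hx).1, fun x hx => absurd hx (Set.notMem_empty x)⟩
            obtain ⟨b, heq', hbM⟩ := hMmodR2 _ ⟨r, hr, hneg, rfl⟩
              ⟨fun x hx => (hpos hx).2, fun x hx => absurd hx (Set.notMem_empty x)⟩
            have hab : a = b := by
              rw [heq] at heq'; exact Option.some_injective _ heq'.symm |>.symm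
            subst hab
            exact ⟨a, heq, haN, hbM⟩
        intro a haM
        exact (hMmin _ hmodel haM).1
  · rintro ⟨⟨hM1mod, hM1min⟩, hMmod2, hMmin2⟩
    rw [reduct_union, reduct_fix] at hMmod2 hMmin2
    unfold isAnswerSet
    rw [reduct_union]
    have hMmodR2 : isModel (reduct P2 M) M := fun r hr => hMmod2 r (Or.inl hr)
    have hMmodR1 : isModel (reduct P1 M) M := by
      rw [hR1]
      rintro r' ⟨r, hr, hneg, rfl⟩ ⟨hpos, -⟩
      have hposU : r.pos ⊆ U := pos_subset_atoms hr
      obtain ⟨a, heq, haM1⟩ := hM1mod _ ⟨r, hr, hneg, rfl⟩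
        ⟨fun x hx => ⟨hpos hx, hposU hx⟩, fun x hx => absurd hx (Set.notMem_empty x)⟩
      exact ⟨a, heq, hM1M haM1⟩
    constructor
    · rintro r' (hr' | hr')
      · exact hMmodR1 r' hr'
      · exact hMmodR2 r' hr'
    · intro N hN
      have hNR1 : isModel (reduct P1 M1) (N ∩ U) := by
        rintro r' ⟨r, hr, hneg, rfl⟩ ⟨hpos, -⟩
        have hmem : (⟨r.head, r.pos, ∅⟩ : Rule A) ∈ reduct P1 M := by
          rw [hR1]; exact ⟨r, hr, hneg, rfl⟩
        obtain ⟨a, heq, haN⟩ := hN _ (Or.inl hmem)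
          ⟨fun x hx => (hpos hx).1, fun x hx => absurd hx (Set.notMem_empty x)⟩
        exact ⟨a, heq, haN, head_mem_atoms hr heq⟩
      have hM1N : M1 ⊆ N ∩ U := hM1min _ hNR1
      have hmodel : isModel (reduct P2 M ∪ fixProg U M1) (N \ (U \ M1)) := by
        rintro r' (⟨r, hr, hneg, rfl⟩ | hr')
        · rintro ⟨hpos, -⟩
          obtain ⟨a, heq, haN⟩ := hN _ (Or.inr ⟨r, hr, hneg, rfl⟩)
            ⟨fun x hx => (hpos hx).1, fun x hx => absurd hx (Set.notMem_empty x)⟩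
          exact ⟨a, heq, haN, fun h => headP2 hr heq h.1⟩
        · rcases hr' with ⟨a, ha, rfl⟩ | ⟨a, ha, rfl⟩
          · exact fun _ => ⟨a, rfl, (hM1N ha.1).1, fun h => h.2 ha.1⟩
          · rintro ⟨hpos, -⟩
            exact absurd ha (fun h => (hpos rfl).2 ⟨h.1, h.2⟩)
      intro a haM
      exact (hMmin2 _ hmodel haM).1
end

section
/- Splitting property for fixing: let P1, P2 be propositional normal programs with atoms(P1) ∩ heads(P2) = ∅, and let M1 be an answer set of P1. Then every answer set M of P2 ∪ fix(P1, M1) has the form M = M1 ∪ M2 where M2 is an answer set of the partial evaluation e_{atoms(P1)}(P2, M1), obtained by deleting rules of P2 whose body contains a literal over atoms(P1) false in M1 and removing from the remaining rules all literals over atoms(P1). -/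
/-- Partial evaluation `e_U(P, X)`: delete rules whose body over `U` conflicts
with `X`, and remove all `U`-literals from the remaining rules. -/
def partialEval {A : Type} (U X : Set A) (P : Set (Rule A)) : Set (Rule A) :=
  {r' | ∃ r ∈ P,
      (∀ a ∈ r.pos, a ∈ U → a ∈ X) ∧ (∀ a ∈ r.neg, a ∈ U → a ∉ X) ∧
      r' = ⟨r.head, r.pos \ U, r.neg \ U⟩}

/-- Splitting property for fixing: if `atoms(P1) ∩ heads(P2) = ∅` and `M1` is an
answer set of `P1`, then every answer set `M` of `P2 ∪ fix(P1,M1)` has the form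
`M = M1 ∪ M2` for some answer set `M2` of `e_{atoms(P1)}(P2, M1)`. -/
theorem fix_splitting {A : Type} (P1 P2 : Set (Rule A))
    (hstrat : progAtoms P1 ∩ progHeads P2 = ∅)
    (M1 : Set A) (hM1 : isAnswerSet P1 M1)
    (M : Set A) (hM : isAnswerSet (P2 ∪ fixProg (progAtoms P1) M1) M) :
    ∃ M2 : Set A, M = M1 ∪ M2 ∧ isAnswerSet (partialEval (progAtoms P1) M1 P2) M2 := by
  set U := progAtoms P1 with hU
  -- heads of P2 avoid U
  have hheads : ∀ r ∈ P2, ∀ a, r.head = some a → a ∉ U := by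
    intro r hr a ha haU
    have : a ∈ progAtoms P1 ∩ progHeads P2 := ⟨haU, ⟨r, hr, ha⟩⟩
    rw [hstrat] at this
    exact this
  -- M1 ⊆ U
  have hM1U : M1 ⊆ U := by
    have hmod : isModel (reduct P1 M1) (M1 ∩ U) := by
      rintro r' ⟨r, hr, hneg, rfl⟩ ⟨hpos, -⟩
      obtain ⟨a, ha, haM⟩ := hM1.1 _ ⟨r, hr, hneg, rfl⟩
        ⟨fun x hx => (hpos hx).1, fun x hx => absurd hx (Set.notMem_empty x)⟩
      refine ⟨a, ha, haM, ?_⟩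
      exact Set.mem_biUnion hr (Or.inl (Or.inl ha))
    intro a ha
    exact (hM1.2 _ hmod ha).2
  -- M1 ⊆ M
  have hM1M : M1 ⊆ M := by
    intro a ha
    have hf : factRule a ∈ P2 ∪ fixProg U M1 := Or.inr (Or.inl ⟨a, ⟨ha, hM1U ha⟩, rfl⟩)
    have hred : (⟨some a, ∅, ∅⟩ : Rule A) ∈ reduct (P2 ∪ fixProg U M1) M :=
      ⟨factRule a, hf, fun x hx => absurd hx (Set.notMem_empty x), rfl⟩
    obtain ⟨b, hb, hbM⟩ := hM.1 _ hred
      ⟨Set.empty_subset _, fun x hx => absurd hx (Set.notMem_empty x)⟩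
    cases Option.some_injective _ hb
    exact hbM
  -- M ∩ U ⊆ M1
  have hMU : ∀ a ∈ M, a ∈ U → a ∈ M1 := by
    intro a haM haU
    by_contra haM1
    have hc : constraintRule a ∈ P2 ∪ fixProg U M1 := Or.inr (Or.inr ⟨a, ⟨haU, haM1⟩, rfl⟩)
    have hred : (⟨none, {a}, ∅⟩ : Rule A) ∈ reduct (P2 ∪ fixProg U M1) M :=
      ⟨constraintRule a, hc, fun x hx => absurd hx (Set.notMem_empty x), rfl⟩
    obtain ⟨b, hb, -⟩ := hM.1 _ hred
      ⟨Set.singleton_subset_iff.2 haM, fun x hx => absurd hx (Set.notMem_empty x)⟩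
    exact Option.some_ne_none b (show (none : Option A) = some b from hb).symm
  refine ⟨M \ U, ?_, ?_, ?_⟩
  · apply Set.eq_of_subset_of_subset
    · intro a ha
      by_cases haU : a ∈ U
      · exact Or.inl (hMU a ha haU)
      · exact Or.inr ⟨ha, haU⟩
    · rintro a (ha | ha)
      · exact hM1M ha
      · exact ha.1
  · -- M \ U is a model of reduct (partialEval U M1 P2) (M \ U)
    rintro r' ⟨r'', ⟨r, hr, hposU, hnegU, rfl⟩, hneg, rfl⟩ ⟨hpos, -⟩
    -- the corresponding reduct rule of the big program
    have hnegM : ∀ b ∈ r.neg, b ∉ M := by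
      intro b hb hbM
      by_cases hbU : b ∈ U
      · exact hnegU b hb hbU (hMU b hbM hbU)
      · exact hneg b ⟨hb, hbU⟩ ⟨hbM, hbU⟩
    have hred : (⟨r.head, r.pos, ∅⟩ : Rule A) ∈ reduct (P2 ∪ fixProg U M1) M :=
      ⟨r, Or.inl hr, hnegM, rfl⟩
    have hposM : r.pos ⊆ M := by
      intro b hb
      by_cases hbU : b ∈ U
      · exact hM1M (hposU b hb hbU)
      · exact (hpos ⟨hb, hbU⟩).1
    obtain ⟨a, ha, haM⟩ := hM.1 _ hred
      ⟨hposM, fun x hx => absurd hx (Set.notMem_empty x)⟩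
    exact ⟨a, ha, haM, hheads r hr a ha⟩
  · -- minimality
    intro N hN
    have hmod : isModel (reduct (P2 ∪ fixProg U M1) M) (M1 ∪ (N \ U)) := by
      rintro r' ⟨r, (hr | hr), hnegM, rfl⟩ ⟨hpos, -⟩
      · -- rule from P2
        have hposU : ∀ a ∈ r.pos, a ∈ U → a ∈ M1 := by
          intro a ha haU
          rcases hpos ha with h | h
          · exact h
          · exact absurd haU h.2
        have hnegU : ∀ a ∈ r.neg, a ∈ U → a ∉ M1 := fun a ha _ haM1 =>
          hnegM a ha (hM1M haM1)
        have hnegM2 : ∀ a ∈ r.neg \ U, a ∉ M \ U := fun a ha haM => hnegM a ha.1 haM.1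
        have hred2 : (⟨r.head, r.pos \ U, ∅⟩ : Rule A) ∈
            reduct (partialEval U M1 P2) (M \ U) :=
          ⟨⟨r.head, r.pos \ U, r.neg \ U⟩, ⟨r, hr, hposU, hnegU, rfl⟩, hnegM2, rfl⟩
        have hposN : r.pos \ U ⊆ N := by
          intro a ha
          rcases hpos ha.1 with h | h
          · exact absurd (hM1U h) ha.2
          · exact h.1
        obtain ⟨a, ha, haN⟩ := hN _ hred2
          ⟨hposN, fun x hx => absurd hx (Set.notMem_empty x)⟩
        exact ⟨a, ha, Or.inr ⟨haN, hheads r hr a ha⟩⟩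
      · -- rule from fixProg
        rcases hr with ⟨a, ⟨haM1, -⟩, rfl⟩ | ⟨a, ⟨haU, haM1⟩, rfl⟩
        · exact ⟨a, rfl, Or.inl haM1⟩
        · exfalso
          rcases hpos (Set.mem_singleton a) with h | h
          · exact haM1 h
          · exact h.2 haU
    intro a ha
    rcases hM.2 _ hmod ha.1 with h | h
    · exact absurd (hM1U h) ha.2
    · exact h.1
end

section
/- The splitting set theorem: if U is a splitting set for a propositional normal program P (i.e., for every rule whose head is in U, all body atoms are in U), then M is an answer set of P if and only if M = X ∪ Y where X is an answer set of bot_U(P) (the rules all of whose atoms lie in U) and Y is an answer set of e_U(P \ bot_U(P), X). -/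
/-- `U` is a splitting set for `P`: every rule whose head is in `U` has all its
atoms in `U`. -/
def isSplittingSet {A : Type} (U : Set A) (P : Set (Rule A)) : Prop :=
  ∀ r ∈ P, (∃ a, r.head = some a ∧ a ∈ U) → r.atoms ⊆ U

/-- `bot_U(P)`: the rules of `P` all of whose atoms lie in `U`. -/
def botU {A : Type} (U : Set A) (P : Set (Rule A)) : Set (Rule A) :=
  {r ∈ P | r.atoms ⊆ U}

/-- Characterization of being a model of a reduct. -/
lemma model_reduct_iff {A : Type} (P : Set (Rule A)) (M N : Set A) :
    isModel (reduct P M) N ↔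
      ∀ r ∈ P, (∀ a ∈ r.neg, a ∉ M) → r.pos ⊆ N →
        ∃ a, r.head = some a ∧ a ∈ N := by
  constructor
  · intro h r hr hneg hpos
    exact h ⟨r.head, r.pos, ∅⟩ ⟨r, hr, hneg, rfl⟩ ⟨hpos, by intro a ha; exact absurd ha (Set.notMem_empty a)⟩
  · rintro h r' ⟨r, hr, hneg, rfl⟩ ⟨hpos, -⟩
    exact h r hr hneg hpos

/-- Characterization of being a model of the reduct of a partial evaluation. -/
lemma model_reduct_pe_iff {A : Type} (U X : Set A) (Q : Set (Rule A)) (Y N : Set A) :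
    isModel (reduct (partialEval U X Q) Y) N ↔
      ∀ r ∈ Q, (∀ a ∈ r.pos, a ∈ U → a ∈ X) → (∀ a ∈ r.neg, a ∈ U → a ∉ X) →
        (∀ a ∈ r.neg \ U, a ∉ Y) → r.pos \ U ⊆ N →
        ∃ a, r.head = some a ∧ a ∈ N := by
  rw [model_reduct_iff]
  constructor
  · intro h r hr h1 h2 h3 h4
    exact h ⟨r.head, r.pos \ U, r.neg \ U⟩ ⟨r, hr, h1, h2, rfl⟩ h3 h4
  · rintro h r' ⟨r, hr, h1, h2, rfl⟩ hneg hpos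
    exact h r hr h1 h2 hneg hpos

/-- The splitting set theorem: for `U` a splitting set of `P`, `M` is an answer
set of `P` iff `M = X ∪ Y` where `X` is an answer set of `bot_U(P)` and `Y` is
an answer set of `e_U(P \ bot_U(P), X)`. -/
theorem splitting_set_theorem {A : Type} (U : Set A) (P : Set (Rule A))
    (hU : isSplittingSet U P) (M : Set A) :
    isAnswerSet P M ↔
      ∃ X Y : Set A, M = X ∪ Y ∧ isAnswerSet (botU U P) X ∧
        isAnswerSet (partialEval U X (P \ botU U P)) Y := by
  -- Heads of rules outside `botU` are outside `U`.
  have hheadT : ∀ r ∈ P \ botU U P, ∀ a, r.head = some a → a ∉ U := by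
    rintro r ⟨hrP, hrnB⟩ a hha haU
    exact hrnB ⟨hrP, hU r hrP ⟨a, hha, haU⟩⟩
  -- Atom facts for rules of botU
  have hposU : ∀ r : Rule A, r.atoms ⊆ U → ∀ a ∈ r.pos, a ∈ U := by
    intro r h a ha; exact h (Or.inl (Or.inr ha))
  have hnegU : ∀ r : Rule A, r.atoms ⊆ U → ∀ a ∈ r.neg, a ∈ U := by
    intro r h a ha; exact h (Or.inr ha)
  have hheadU : ∀ r : Rule A, r.atoms ⊆ U → ∀ a, r.head = some a → a ∈ U := by
    intro r h a ha; exact h (Or.inl (Or.inl ha))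
  constructor
  · rintro ⟨hmod, hmin⟩
    rw [model_reduct_iff] at hmod
    set X := M ∩ U with hXdef
    set Y := M \ U with hYdef
    have hXU : X ⊆ U := Set.inter_subset_right
    have hXM : X ⊆ M := Set.inter_subset_left
    have hYM : Y ⊆ M := Set.diff_subset
    have hYnU : ∀ a ∈ Y, a ∉ U := fun a ha => ha.2
    -- X is a model of reduct (botU U P) X
    have hXmod : isModel (reduct (botU U P) X) X := by
      rw [model_reduct_iff]
      rintro r ⟨hrP, hatoms⟩ hneg hpos
      have hnegM : ∀ a ∈ r.neg, a ∉ M := fun a ha haM =>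
        hneg a ha ⟨haM, hnegU r hatoms a ha⟩
      obtain ⟨a, hha, haM⟩ := hmod r hrP hnegM (hpos.trans hXM)
      exact ⟨a, hha, haM, hheadU r hatoms a hha⟩
    -- Y is a model of reduct (partialEval ...) Y
    have hYmod : isModel (reduct (partialEval U X (P \ botU U P)) Y) Y := by
      rw [model_reduct_pe_iff]
      rintro r hrT h1 h2 h3 h4
      obtain ⟨hrP, hrnB⟩ := hrT
      have hnegM : ∀ a ∈ r.neg, a ∉ M := by
        intro a ha haM
        by_cases haU : a ∈ U
        · exact h2 a ha haU ⟨haM, haU⟩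
        · exact h3 a ⟨ha, haU⟩ ⟨haM, haU⟩
      have hposM : r.pos ⊆ M := by
        intro b hb
        by_cases hbU : b ∈ U
        · exact hXM (h1 b hb hbU)
        · exact hYM (h4 ⟨hb, hbU⟩)
      obtain ⟨a, hha, haM⟩ := hmod r hrP hnegM hposM
      exact ⟨a, hha, haM, hheadT r ⟨hrP, hrnB⟩ a hha⟩
    refine ⟨X, Y, (Set.inter_union_diff M U).symm, ⟨hXmod, ?_⟩, ⟨hYmod, ?_⟩⟩
    · -- minimality of X
      intro N hN
      rw [model_reduct_iff] at hN
      have hW : isModel (reduct P M) ((N ∩ X) ∪ (M \ U)) := by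
        rw [model_reduct_iff]
        intro r hrP hneg hpos
        by_cases hB : r.atoms ⊆ U
        · have hposNX : r.pos ⊆ N ∩ X := by
            intro b hb
            rcases hpos hb with h | h
            · exact h
            · exact absurd (hposU r hB b hb) h.2
          have hnegX : ∀ a ∈ r.neg, a ∉ X := fun a ha haX => hneg a ha (hXM haX)
          obtain ⟨a, hha, haX⟩ :=
            (model_reduct_iff _ _ _).mp hXmod r ⟨hrP, hB⟩ hnegX
              (hposNX.trans Set.inter_subset_right)
          obtain ⟨a', hha', haN⟩ := hN r ⟨hrP, hB⟩ hnegX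
            (hposNX.trans Set.inter_subset_left)
          have : a = a' := by rw [hha] at hha'; exact Option.some.inj hha'
          subst this
          exact ⟨a, hha, Or.inl ⟨haN, haX⟩⟩
        · have hposM : r.pos ⊆ M := by
            intro b hb
            rcases hpos hb with h | h
            · exact hXM h.2
            · exact h.1
          obtain ⟨a, hha, haM⟩ := hmod r hrP hneg hposM
          have haU : a ∉ U := fun haU => hB (hU r hrP ⟨a, hha, haU⟩)
          exact ⟨a, hha, Or.inr ⟨haM, haU⟩⟩
      have hMW := hmin _ hW
      intro a haX
      rcases hMW (hXM haX) with h | h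
      · exact h.1
      · exact absurd (hXU haX) h.2
    · -- minimality of Y
      intro N hN
      rw [model_reduct_pe_iff] at hN
      have hW : isModel (reduct P M) (X ∪ (N ∩ Y)) := by
        rw [model_reduct_iff]
        intro r hrP hneg hpos
        by_cases hB : r.atoms ⊆ U
        · have hposX : r.pos ⊆ X := by
            intro b hb
            rcases hpos hb with h | h
            · exact h
            · exact absurd (hposU r hB b hb) h.2.2
          have hnegX : ∀ a ∈ r.neg, a ∉ X := fun a ha haX => hneg a ha (hXM haX)
          obtain ⟨a, hha, haX⟩ :=
            (model_reduct_iff _ _ _).mp hXmod r ⟨hrP, hB⟩ hnegX hposX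
          exact ⟨a, hha, Or.inl haX⟩
        · have hrT : r ∈ P \ botU U P := ⟨hrP, fun h => hB h.2⟩
          have h1 : ∀ a ∈ r.pos, a ∈ U → a ∈ X := by
            intro a ha haU
            rcases hpos ha with h | h
            · exact h
            · exact absurd haU h.2.2
          have h2 : ∀ a ∈ r.neg, a ∈ U → a ∉ X :=
            fun a ha _ haX => hneg a ha (hXM haX)
          have h3 : ∀ a ∈ r.neg \ U, a ∉ Y :=
            fun a ha haY => hneg a ha.1 (hYM haY)
          have h4 : r.pos \ U ⊆ N ∩ Y := by
            rintro b ⟨hb, hbU⟩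
            rcases hpos hb with h | h
            · exact absurd (hXU h) hbU
            · exact h
          obtain ⟨a, hha, haN⟩ := hN r hrT h1 h2 h3
            (h4.trans Set.inter_subset_left)
          obtain ⟨a', hha', haY⟩ :=
            (model_reduct_pe_iff _ _ _ _ _).mp hYmod r hrT h1 h2 h3
              (h4.trans Set.inter_subset_right)
          have : a = a' := by rw [hha] at hha'; exact Option.some.inj hha'
          subst this
          exact ⟨a, hha, Or.inr ⟨haN, haY⟩⟩
      have hMW := hmin _ hW
      intro a haY
      rcases hMW (hYM haY) with h | h
      · exact absurd (hXU h) haY.2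
      · exact h.1
  · rintro ⟨X, Y, rfl, ⟨hXmod, hXmin⟩, ⟨hYmod, hYmin⟩⟩
    -- X ⊆ U
    have hXU : X ⊆ U := by
      have : isModel (reduct (botU U P) X) (X ∩ U) := by
        rw [model_reduct_iff]
        rintro r ⟨hrP, hatoms⟩ hneg hpos
        obtain ⟨a, hha, haX⟩ := (model_reduct_iff _ _ _).mp hXmod r ⟨hrP, hatoms⟩
          hneg (hpos.trans Set.inter_subset_left)
        exact ⟨a, hha, haX, hheadU r hatoms a hha⟩
      exact (hXmin _ this).trans Set.inter_subset_right
    -- Y ∩ U = ∅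
    have hYnU : ∀ a ∈ Y, a ∉ U := by
      have : isModel (reduct (partialEval U X (P \ botU U P)) Y) (Y \ U) := by
        rw [model_reduct_pe_iff]
        intro r hrT h1 h2 h3 h4
        obtain ⟨a, hha, haY⟩ := (model_reduct_pe_iff _ _ _ _ _).mp hYmod r hrT
          h1 h2 h3 (h4.trans Set.diff_subset)
        exact ⟨a, hha, haY, hheadT r hrT a hha⟩
      intro a haY
      exact (hYmin _ this haY).2
    -- X ∪ Y is a model of reduct P (X ∪ Y)
    have hMmod : isModel (reduct P (X ∪ Y)) (X ∪ Y) := by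
      rw [model_reduct_iff]
      intro r hrP hneg hpos
      by_cases hB : r.atoms ⊆ U
      · have hposX : r.pos ⊆ X := by
          intro b hb
          rcases hpos hb with h | h
          · exact h
          · exact absurd (hposU r hB b hb) (hYnU b h)
        have hnegX : ∀ a ∈ r.neg, a ∉ X := fun a ha haX => hneg a ha (Or.inl haX)
        obtain ⟨a, hha, haX⟩ :=
          (model_reduct_iff _ _ _).mp hXmod r ⟨hrP, hB⟩ hnegX hposX
        exact ⟨a, hha, Or.inl haX⟩
      · have hrT : r ∈ P \ botU U P := ⟨hrP, fun h => hB h.2⟩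
        have h1 : ∀ a ∈ r.pos, a ∈ U → a ∈ X := by
          intro a ha haU
          rcases hpos ha with h | h
          · exact h
          · exact absurd haU (hYnU a h)
        have h2 : ∀ a ∈ r.neg, a ∈ U → a ∉ X :=
          fun a ha _ haX => hneg a ha (Or.inl haX)
        have h3 : ∀ a ∈ r.neg \ U, a ∉ Y :=
          fun a ha haY => hneg a ha.1 (Or.inr haY)
        have h4 : r.pos \ U ⊆ Y := by
          rintro b ⟨hb, hbU⟩
          rcases hpos hb with h | h
          · exact absurd (hXU h) hbU
          · exact h
        obtain ⟨a, hha, haY⟩ :=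
          (model_reduct_pe_iff _ _ _ _ _).mp hYmod r hrT h1 h2 h3 h4
        exact ⟨a, hha, Or.inr haY⟩
    refine ⟨hMmod, ?_⟩
    -- minimality
    intro N hN
    rw [model_reduct_iff] at hN
    -- W = N ∩ (X ∪ Y) is a model of reduct P (X ∪ Y)
    have hWmod : ∀ r ∈ P, (∀ a ∈ r.neg, a ∉ X ∪ Y) → r.pos ⊆ N ∩ (X ∪ Y) →
        ∃ a, r.head = some a ∧ a ∈ N ∩ (X ∪ Y) := by
      intro r hrP hneg hpos
      obtain ⟨a, hha, haN⟩ := hN r hrP hneg (hpos.trans Set.inter_subset_left)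
      obtain ⟨a', hha', haM⟩ := (model_reduct_iff _ _ _).mp hMmod r hrP hneg
        (hpos.trans Set.inter_subset_right)
      have : a = a' := by rw [hha] at hha'; exact Option.some.inj hha'
      subst this
      exact ⟨a, hha, haN, haM⟩
    have hXN : X ⊆ N := by
      have hm : isModel (reduct (botU U P) X) ((N ∩ (X ∪ Y)) ∩ U) := by
        rw [model_reduct_iff]
        rintro r ⟨hrP, hatoms⟩ hnegX hpos
        have hnegM : ∀ a ∈ r.neg, a ∉ X ∪ Y := by
          rintro a ha (h | h)
          · exact hnegX a ha h
          · exact hYnU a h (hnegU r hatoms a ha)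
        obtain ⟨a, hha, haW⟩ := hWmod r hrP hnegM
          (hpos.trans Set.inter_subset_left)
        exact ⟨a, hha, haW, hheadU r hatoms a hha⟩
      exact (hXmin _ hm).trans ((Set.inter_subset_left).trans Set.inter_subset_left)
    have hYN : Y ⊆ N := by
      have hm : isModel (reduct (partialEval U X (P \ botU U P)) Y)
          ((N ∩ (X ∪ Y)) \ U) := by
        rw [model_reduct_pe_iff]
        intro r hrT h1 h2 h3 h4
        have hnegM : ∀ a ∈ r.neg, a ∉ X ∪ Y := by
          rintro a ha (h | h)
          · exact h2 a ha (hXU h) h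
          · by_cases haU : a ∈ U
            · exact hYnU a h haU
            · exact h3 a ⟨ha, haU⟩ h
        have hpos : r.pos ⊆ N ∩ (X ∪ Y) := by
          intro b hb
          by_cases hbU : b ∈ U
          · have hbX := h1 b hb hbU
            exact ⟨hXN hbX, Or.inl hbX⟩
          · exact (h4 ⟨hb, hbU⟩).1
        obtain ⟨a, hha, haW⟩ := hWmod r hrT.1 hnegM hpos
        exact ⟨a, hha, haW, hheadT r hrT a hha⟩
      exact (hYmin _ hm).trans ((Set.diff_subset).trans Set.inter_subset_left)
    exact Set.union_subset hXN hYN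
end

section
/- Clone optimality preservation: let P1 and P2 be programs with weak constraints (costs), M1 an answer set of P1, and let remap(P2,P1) be the program consisting of a cloned copy clone^c(P2) of P2 together with rules clone^c(a) ← a and constraints ← clone^c(a), ∼a for each atom a of P1. Then M is an optimal answer set of remap(P2,P1) ∪ fix(P1,M1) if and only if M = M1 ∪ clone^c(M2) for some optimal answer set M2 of P2 ∪ fix(P1,M1). -/
/-- A ground weak constraint: body (positive and negative atoms), weight and level. -/
structure WConstraint (A : Type) where
  pos : Set A
  neg : Set A
  weight : ℤ
  level : ℤ

/-- A weak constraint is violated by `I` when its body is true in `I`. -/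
def WConstraint.violated {A : Type} (c : WConstraint A) (I : Set A) : Prop :=
  c.pos ⊆ I ∧ ∀ a ∈ c.neg, a ∉ I

open Classical in
/-- Cost of interpretation `I` at level `l`: sum of the weights of the
violated weak constraints of level `l`. -/
noncomputable def costW {A : Type} (W : List (WConstraint A)) (I : Set A) (l : ℤ) : ℤ :=
  (W.map (fun c => if c.level = l ∧ c.violated I then c.weight else 0)).sum

/-- `I1` is dominated by `I2`. -/
def DominatedW {A : Type} (W : List (WConstraint A)) (I1 I2 : Set A) : Prop :=
  ∃ l, costW W I2 l < costW W I1 l ∧ ∀ l' > l, costW W I2 l' = costW W I1 l'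

/-- Optimal answer sets of a program with weak constraints `W`. -/
def isOptAnswerSet {A : Type} (P : Set (Rule A)) (W : List (WConstraint A)) (M : Set A) : Prop :=
  isAnswerSet P M ∧ ∀ M', isAnswerSet P M' → ¬ DominatedW W M M'

/-- Renaming of a rule along an atom map `σ`. -/
def Rule.map {A A' : Type} (σ : A → A') (r : Rule A) : Rule A' :=
  ⟨r.head.map σ, σ '' r.pos, σ '' r.neg⟩

/-- Renaming of a program along an atom map `σ`. -/
def progMap {A A' : Type} (σ : A → A') (P : Set (Rule A)) : Set (Rule A') :=
  (Rule.map σ) '' P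

/-- Renaming of a weak constraint along an atom map `σ`. -/
def WConstraint.map {A A' : Type} (σ : A → A') (c : WConstraint A) : WConstraint A' :=
  ⟨σ '' c.pos, σ '' c.neg, c.weight, c.level⟩

/-- `remap(P2,P1)` (rule part): the clone `clone^c(P2)` of the rules of `P2`
together with the rules `clone^c(a) ← a` and the constraints `← clone^c(a), ∼a`
for every atom `a` of `P1`; the clone is given by `σ`. -/
def remapProg {A : Type} (σ : A → A) (R2 P1 : Set (Rule A)) : Set (Rule A) :=
  progMap σ R2 ∪
    {r | ∃ a ∈ progAtoms P1, r = ⟨some (σ a), {a}, ∅⟩} ∪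
    {r | ∃ a ∈ progAtoms P1, r = ⟨none, {σ a}, {a}⟩}

section AuxLemmas

variable {A : Type}

lemma answerSet_subset_heads {P : Set (Rule A)} {M : Set A}
    (h : isAnswerSet P M) : M ⊆ progHeads P := by
  have hmod : isModel (reduct P M) (M ∩ progHeads P) := by
    rintro r' ⟨r, hr, hneg, rfl⟩ hb
    obtain ⟨a, ha1, ha2⟩ := h.1 _ ⟨r, hr, hneg, rfl⟩
      ⟨hb.1.trans Set.inter_subset_left, fun x hx => absurd hx (Set.notMem_empty x)⟩
    exact ⟨a, ha1, ha2, r, hr, ha1⟩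
  intro a ha
  exact (h.2 _ hmod ha).2

lemma progHeads_subset_atoms {P : Set (Rule A)} : progHeads P ⊆ progAtoms P := by
  rintro a ⟨r, hr, hh⟩
  exact Set.mem_biUnion hr (Set.mem_union_left _ (Set.mem_union_left _ hh))

lemma costW_map (σ : A → A) (hinj : Function.Injective σ)
    (W2 : List (WConstraint A)) {M1 : Set A} (M2 : Set A)
    (hdisj : ∀ a, σ a ∉ M1) (l : ℤ) :
    costW (W2.map (WConstraint.map σ)) (M1 ∪ σ '' M2) l = costW W2 M2 l := by
  classical
  unfold costW
  rw [List.map_map]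
  congr 1
  apply List.map_congr_left
  intro c _
  have hmem : ∀ a, σ a ∈ M1 ∪ σ '' M2 ↔ a ∈ M2 := by
    intro a
    constructor
    · rintro (h | ⟨b, hb, hba⟩)
      · exact absurd h (hdisj a)
      · rwa [← hinj hba]
    · intro h; exact Or.inr ⟨a, h, rfl⟩
  have hviol : (WConstraint.map σ c).violated (M1 ∪ σ '' M2) ↔ c.violated M2 := by
    unfold WConstraint.violated WConstraint.map
    constructor
    · rintro ⟨h1, h2⟩
      exact ⟨fun a ha => (hmem a).1 (h1 ⟨a, ha, rfl⟩),
        fun a ha hm => h2 (σ a) ⟨a, ha, rfl⟩ ((hmem a).2 hm)⟩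
    · rintro ⟨h1, h2⟩
      constructor
      · rintro x ⟨a, ha, rfl⟩; exact (hmem a).2 (h1 ha)
      · rintro x ⟨a, ha, rfl⟩ hx; exact h2 a ha ((hmem a).1 hx)
  simp only [WConstraint.map] at hviol
  simp only [Function.comp_apply, WConstraint.map]
  exact if_congr (and_congr_right fun _ => hviol) rfl rfl

end AuxLemmas
lemma remap_answerSets {A : Type} (σ : A → A) (hinj : Function.Injective σ)
    (P1 R2 : Set (Rule A)) (hfresh : ∀ a, σ a ∉ progAtoms P1)
    (M1 : Set A) (hM1U : M1 ⊆ progAtoms P1) (M : Set A) :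
    isAnswerSet (remapProg σ R2 P1 ∪ fixProg (progAtoms P1) M1) M ↔
      ∃ M2, isAnswerSet (R2 ∪ fixProg (progAtoms P1) M1) M2 ∧ M = M1 ∪ σ '' M2 := by
  have hσM1 : ∀ a, σ a ∉ M1 := fun a h => hfresh a (hM1U h)
  -- membership helpers
  have hmapP : ∀ r ∈ R2, Rule.map σ r ∈ remapProg σ R2 P1 ∪ fixProg (progAtoms P1) M1 :=
    fun r hr => Set.mem_union_left _ (Set.mem_union_left _ (Set.mem_union_left _
      (Set.mem_image_of_mem _ hr)))
  have hcopyP : ∀ a ∈ progAtoms P1,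
      (⟨some (σ a), {a}, ∅⟩ : Rule A) ∈ remapProg σ R2 P1 ∪ fixProg (progAtoms P1) M1 :=
    fun a ha => Set.mem_union_left _ (Set.mem_union_left _ (Set.mem_union_right _ ⟨a, ha, rfl⟩))
  have hccP : ∀ a ∈ progAtoms P1,
      (⟨none, {σ a}, {a}⟩ : Rule A) ∈ remapProg σ R2 P1 ∪ fixProg (progAtoms P1) M1 :=
    fun a ha => Set.mem_union_left _ (Set.mem_union_right _ ⟨a, ha, rfl⟩)
  have hfactP : ∀ a ∈ M1, factRule a ∈ remapProg σ R2 P1 ∪ fixProg (progAtoms P1) M1 :=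
    fun a ha => Set.mem_union_right _ (Set.mem_union_left _ ⟨a, ⟨ha, hM1U ha⟩, rfl⟩)
  have hconP : ∀ a ∈ progAtoms P1, a ∉ M1 →
      constraintRule a ∈ remapProg σ R2 P1 ∪ fixProg (progAtoms P1) M1 :=
    fun a ha hna => Set.mem_union_right _ (Set.mem_union_right _ ⟨a, ⟨ha, hna⟩, rfl⟩)
  have hfactQ : ∀ a ∈ M1, factRule a ∈ R2 ∪ fixProg (progAtoms P1) M1 :=
    fun a ha => Set.mem_union_right _ (Set.mem_union_left _ ⟨a, ⟨ha, hM1U ha⟩, rfl⟩)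
  have hconQ : ∀ a ∈ progAtoms P1, a ∉ M1 → constraintRule a ∈ R2 ∪ fixProg (progAtoms P1) M1 :=
    fun a ha hna => Set.mem_union_right _ (Set.mem_union_right _ ⟨a, ⟨ha, hna⟩, rfl⟩)
  -- generic consequences of modeling a reduct
  have noneg : ∀ (N : Set A) (x : A), x ∈ (∅ : Set A) → x ∉ N :=
    fun _ x hx => absurd hx (Set.notMem_empty x)
  have hfact_sat : ∀ (P' : Set (Rule A)) (Mr N : Set A), isModel (reduct P' Mr) N →
      ∀ a, factRule a ∈ P' → a ∈ N := by
    intro P' Mr N hmod a ha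
    obtain ⟨b, hb1, hb2⟩ := hmod _ ⟨factRule a, ha, noneg Mr, rfl⟩ ⟨Set.empty_subset N, noneg N⟩
    obtain rfl : a = b := Option.some.inj hb1
    exact hb2
  have hcon_sat : ∀ (P' : Set (Rule A)) (Mr N : Set A), isModel (reduct P' Mr) N →
      ∀ a, constraintRule a ∈ P' → a ∉ N := by
    intro P' Mr N hmod a ha haN
    obtain ⟨b, hb1, -⟩ := hmod _ ⟨constraintRule a, ha, noneg Mr, rfl⟩
      ⟨Set.singleton_subset_iff.mpr haN, noneg N⟩
    cases hb1
  constructor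
  · -- forward direction
    intro hM
    have hM1M : M1 ⊆ M := fun a ha => hfact_sat _ _ _ hM.1 a (hfactP a ha)
    have hUnotM : ∀ a ∈ progAtoms P1, a ∉ M1 → a ∉ M :=
      fun a ha hna => hcon_sat _ _ _ hM.1 a (hconP a ha hna)
    have hcopy : ∀ a ∈ progAtoms P1, a ∈ M → σ a ∈ M := by
      intro a ha haM
      obtain ⟨b, hb1, hb2⟩ := hM.1 _ ⟨_, hcopyP a ha, noneg M, rfl⟩
        ⟨Set.singleton_subset_iff.mpr haM, noneg M⟩
      obtain rfl : σ a = b := Option.some.inj hb1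
      exact hb2
    have hcc : ∀ a ∈ progAtoms P1, a ∉ M → σ a ∉ M := by
      intro a ha haM hsaM
      obtain ⟨b, hb1, -⟩ := hM.1 _ ⟨_, hccP a ha,
        fun x hx => by rw [Set.mem_singleton_iff] at hx; subst hx; exact haM, rfl⟩
        ⟨Set.singleton_subset_iff.mpr hsaM, noneg M⟩
      cases hb1
    have hMsub : M ⊆ M1 ∪ Set.range σ := by
      intro x hx
      obtain ⟨r, hr, hhead⟩ := answerSet_subset_heads hM hx
      simp only [remapProg, fixProg, progMap, Set.mem_union, Set.mem_image,
        Set.mem_setOf_eq] at hr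
      rcases hr with (((⟨s, hs, rfl⟩ | ⟨a, ha, rfl⟩) | ⟨a, ha, rfl⟩) | (⟨a, ha, rfl⟩ | ⟨a, ha, rfl⟩))
      · obtain ⟨b, -, rfl⟩ := Option.map_eq_some_iff.mp hhead
        exact Or.inr ⟨b, rfl⟩
      · obtain rfl : σ a = x := Option.some.inj hhead
        exact Or.inr ⟨a, rfl⟩
      · cases hhead
      · obtain rfl : a = x := Option.some.inj hhead
        exact Or.inl ha.1
      · cases hhead
    have hMeq : M = M1 ∪ σ '' {a | σ a ∈ M} := by
      apply Set.Subset.antisymm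
      · intro x hx
        rcases hMsub hx with h | ⟨b, rfl⟩
        · exact Or.inl h
        · exact Or.inr ⟨b, hx, rfl⟩
      · rintro x (hx | ⟨b, hb, rfl⟩)
        · exact hM1M hx
        · exact hb
    have hM1M2 : ∀ a ∈ M1, σ a ∈ M := fun a ha => hcopy a (hM1U ha) (hM1M ha)
    have hM2M1 : ∀ a ∈ progAtoms P1, σ a ∈ M → a ∈ M1 := by
      intro a ha haM2
      by_contra hn
      exact hcc a ha (hUnotM a ha hn) haM2
    refine ⟨{a | σ a ∈ M}, ⟨?_, ?_⟩, hMeq⟩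
    · -- model of reduct Q
      rintro r' ⟨r, hr, hneg, rfl⟩ hb
      rcases hr with hs | hf
      · have hnegM : ∀ x ∈ (Rule.map σ r).neg, x ∉ M := by
          rintro x ⟨b, hbneg, rfl⟩ hxM
          exact hneg b hbneg hxM
        have hposM : (Rule.map σ r).pos ⊆ M := by
          rintro x ⟨b, hbpos, rfl⟩
          exact hb.1 hbpos
        obtain ⟨c, hc1, hc2⟩ := hM.1 _ ⟨Rule.map σ r, hmapP r hs, hnegM, rfl⟩ ⟨hposM, noneg M⟩
        obtain ⟨a, ha1, rfl⟩ := Option.map_eq_some_iff.mp hc1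
        exact ⟨a, ha1, hc2⟩
      · simp only [fixProg, Set.mem_union, Set.mem_setOf_eq] at hf
        rcases hf with ⟨a, ha, rfl⟩ | ⟨a, ha, rfl⟩
        · exact ⟨a, rfl, hM1M2 a ha.1⟩
        · exact absurd (hM2M1 a ha.1 (hb.1 rfl)) ha.2
    · -- minimality for Q
      intro N2 hN2
      have hNmod : isModel (reduct (remapProg σ R2 P1 ∪ fixProg (progAtoms P1) M1) M)
          (M1 ∪ σ '' N2) := by
        rintro r' ⟨r, hr, hneg, rfl⟩ hb
        rcases hr with hrm | hf
        · simp only [remapProg, progMap, Set.mem_union, Set.mem_image, Set.mem_setOf_eq] at hrm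
          rcases hrm with (⟨s, hs, rfl⟩ | ⟨a, ha, rfl⟩) | ⟨a, ha, rfl⟩
          · -- cloned rule
            have hnegQ : ∀ b ∈ s.neg, σ b ∉ M := by
              intro b hbneg
              exact hneg (σ b) ⟨b, hbneg, rfl⟩
            have hposN2 : s.pos ⊆ N2 := by
              intro b hbpos
              rcases hb.1 ⟨b, hbpos, rfl⟩ with h | ⟨c, hc, hcb⟩
              · exact absurd h (hσM1 b)
              · rwa [← hinj hcb]
            obtain ⟨a, ha1, ha2⟩ := hN2 _ ⟨s, Set.mem_union_left _ hs, hnegQ, rfl⟩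
              ⟨hposN2, noneg N2⟩
            have ha1' : s.head = some a := ha1
            refine ⟨σ a, ?_, Or.inr ⟨a, ha2, rfl⟩⟩
            show s.head.map σ = some (σ a)
            rw [ha1']; rfl
          · -- copy rule
            have haN : a ∈ M1 ∪ σ '' N2 := hb.1 rfl
            have haM1 : a ∈ M1 := by
              rcases haN with h | ⟨b, hbN2, rfl⟩
              · exact h
              · exact absurd ha (hfresh b)
            have haN2 : a ∈ N2 := hfact_sat _ _ _ hN2 a (hfactQ a haM1)
            exact ⟨σ a, rfl, Or.inr ⟨a, haN2, rfl⟩⟩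
          · -- clone constraint rule
            have hsaN : σ a ∈ M1 ∪ σ '' N2 := hb.1 rfl
            have haN2 : a ∈ N2 := by
              rcases hsaN with h | ⟨b, hbN2, hba⟩
              · exact absurd h (hσM1 a)
              · rwa [← hinj hba]
            have hanM : a ∉ M := hneg a rfl
            have hanM1 : a ∉ M1 := fun h => hanM (hM1M h)
            exact absurd haN2 (hcon_sat _ _ _ hN2 a (hconQ a ha hanM1))
        · simp only [fixProg, Set.mem_union, Set.mem_setOf_eq] at hf
          rcases hf with ⟨a, ha, rfl⟩ | ⟨a, ha, rfl⟩
          · exact ⟨a, rfl, Or.inl ha.1⟩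
          · have haN : a ∈ M1 ∪ σ '' N2 := hb.1 rfl
            rcases haN with h | ⟨b, hbN2, rfl⟩
            · exact absurd h ha.2
            · exact absurd ha.1 (hfresh b)
      have hMN := hM.2 _ hNmod
      intro a haM2
      rcases hMN haM2 with h | ⟨b, hb, hba⟩
      · exact absurd h (hσM1 a)
      · rwa [← hinj hba]
  · -- backward direction
    rintro ⟨M2, hM2, rfl⟩
    have hM1M2 : M1 ⊆ M2 := fun a ha => hfact_sat _ _ _ hM2.1 a (hfactQ a ha)
    have hM2M1 : ∀ a ∈ progAtoms P1, a ∉ M1 → a ∉ M2 :=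
      fun a ha hna => hcon_sat _ _ _ hM2.1 a (hconQ a ha hna)
    have hσMem : ∀ a, σ a ∈ M1 ∪ σ '' M2 ↔ a ∈ M2 := by
      intro a
      constructor
      · rintro (h | ⟨b, hb, hba⟩)
        · exact absurd h (hσM1 a)
        · rwa [← hinj hba]
      · intro h; exact Or.inr ⟨a, h, rfl⟩
    have hUMem : ∀ a ∈ progAtoms P1, (a ∈ M1 ∪ σ '' M2 ↔ a ∈ M1) := by
      intro a ha
      constructor
      · rintro (h | ⟨b, hb, rfl⟩)
        · exact h
        · exact absurd ha (hfresh b)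
      · exact Or.inl
    constructor
    · -- model of reduct P
      rintro r' ⟨r, hr, hneg, rfl⟩ hb
      rcases hr with hrm | hf
      · simp only [remapProg, progMap, Set.mem_union, Set.mem_image, Set.mem_setOf_eq] at hrm
        rcases hrm with (⟨s, hs, rfl⟩ | ⟨a, ha, rfl⟩) | ⟨a, ha, rfl⟩
        · have hnegQ : ∀ b ∈ s.neg, b ∉ M2 := fun b hbneg hbM2 =>
            hneg (σ b) ⟨b, hbneg, rfl⟩ ((hσMem b).2 hbM2)
          have hposM2 : s.pos ⊆ M2 := fun b hbpos => (hσMem b).1 (hb.1 ⟨b, hbpos, rfl⟩)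
          obtain ⟨a, ha1, ha2⟩ := hM2.1 _ ⟨s, Set.mem_union_left _ hs, hnegQ, rfl⟩
            ⟨hposM2, noneg M2⟩
          have ha1' : s.head = some a := ha1
          refine ⟨σ a, ?_, (hσMem a).2 ha2⟩
          show s.head.map σ = some (σ a)
          rw [ha1']; rfl
        · -- copy rule
          have haM1 : a ∈ M1 := (hUMem a ha).1 (hb.1 rfl)
          exact ⟨σ a, rfl, (hσMem a).2 (hM1M2 haM1)⟩
        · -- clone constraint rule
          have haM2 : a ∈ M2 := (hσMem a).1 (hb.1 rfl)
          have haM1 : a ∈ M1 := by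
            by_contra hn
            exact hM2M1 a ha hn haM2
          exact absurd (Set.mem_union_left _ haM1) (hneg a rfl)
      · simp only [fixProg, Set.mem_union, Set.mem_setOf_eq] at hf
        rcases hf with ⟨a, ha, rfl⟩ | ⟨a, ha, rfl⟩
        · exact ⟨a, rfl, Or.inl ha.1⟩
        · exact absurd ((hUMem a ha.1).1 (hb.1 rfl)) ha.2
    · -- minimality for P
      intro N hN
      have hM1N : M1 ⊆ N := fun a ha => hfact_sat _ _ _ hN a (hfactP a ha)
      have hN2 : isModel (reduct (R2 ∪ fixProg (progAtoms P1) M1) M2) {a | σ a ∈ N} := by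
        rintro r' ⟨r, hr, hneg, rfl⟩ hb
        rcases hr with hs | hf
        · have hnegM : ∀ x ∈ (Rule.map σ r).neg, x ∉ M1 ∪ σ '' M2 := by
            rintro x ⟨b, hbneg, rfl⟩ hxM
            exact hneg b hbneg ((hσMem b).1 hxM)
          have hposN : (Rule.map σ r).pos ⊆ N := by
            rintro x ⟨b, hbpos, rfl⟩
            exact hb.1 hbpos
          obtain ⟨c, hc1, hc2⟩ := hN _ ⟨Rule.map σ r, hmapP r hs, hnegM, rfl⟩ ⟨hposN, noneg N⟩
          obtain ⟨a, ha1, rfl⟩ := Option.map_eq_some_iff.mp hc1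
          exact ⟨a, ha1, hc2⟩
        · simp only [fixProg, Set.mem_union, Set.mem_setOf_eq] at hf
          rcases hf with ⟨a, ha, rfl⟩ | ⟨a, ha, rfl⟩
          · refine ⟨a, rfl, ?_⟩
            obtain ⟨b, hb1, hb2⟩ := hN _ ⟨_, hcopyP a (hM1U ha.1), noneg _, rfl⟩
              ⟨Set.singleton_subset_iff.mpr (hM1N ha.1), noneg N⟩
            obtain rfl : σ a = b := Option.some.inj hb1
            exact hb2
          · have haN : σ a ∈ N := hb.1 rfl
            have hanM : a ∉ M1 ∪ σ '' M2 := fun h => ha.2 ((hUMem a ha.1).1 h)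
            obtain ⟨b, hb1, -⟩ := hN _ ⟨_, hccP a ha.1,
              fun x hx => by rw [Set.mem_singleton_iff] at hx; subst hx; exact hanM, rfl⟩
              ⟨Set.singleton_subset_iff.mpr haN, noneg N⟩
            cases hb1
      have hsub := hM2.2 _ hN2
      rintro x (hx | ⟨b, hb, rfl⟩)
      · exact hM1N hx
      · exact hsub hb
/-- Clone optimality preservation: for an injective clone map `σ` into fresh
atoms, `M` is an optimal answer set of `remap(P2,P1) ∪ fix(P1,M1)` (with the
cloned weak constraints) iff `M = M1 ∪ σ '' M2` for some optimal answer set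
`M2` of `P2 ∪ fix(P1,M1)`. -/
theorem remap_optimal_answerSets {A : Type} (σ : A → A)
    (hinj : Function.Injective σ)
    (P1 R2 : Set (Rule A)) (W2 : List (WConstraint A))
    (hfresh : ∀ a : A,
      σ a ∉ progAtoms P1 ∪ progAtoms R2 ∪ (⋃ c ∈ W2, (c.pos ∪ c.neg)))
    (M1 : Set A) (hM1 : isAnswerSet P1 M1) (M : Set A) :
    isOptAnswerSet (remapProg σ R2 P1 ∪ fixProg (progAtoms P1) M1)
        (W2.map (WConstraint.map σ)) M ↔
      ∃ M2 : Set A,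
        isOptAnswerSet (R2 ∪ fixProg (progAtoms P1) M1) W2 M2 ∧
        M = M1 ∪ σ '' M2 := by
  have hM1U : M1 ⊆ progAtoms P1 :=
    (answerSet_subset_heads hM1).trans progHeads_subset_atoms
  have hfresh' : ∀ a, σ a ∉ progAtoms P1 := fun a h => hfresh a (Or.inl (Or.inl h))
  have hσM1 : ∀ a, σ a ∉ M1 := fun a h => hfresh' a (hM1U h)
  have hAS := remap_answerSets σ hinj P1 R2 hfresh' M1 hM1U
  have hcost : ∀ (M2 : Set A) (l : ℤ),
      costW (W2.map (WConstraint.map σ)) (M1 ∪ σ '' M2) l = costW W2 M2 l :=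
    fun M2 l => costW_map σ hinj W2 M2 hσM1 l
  constructor
  · rintro ⟨hMas, hopt⟩
    obtain ⟨M2, hM2, rfl⟩ := (hAS _).mp hMas
    refine ⟨M2, ⟨hM2, ?_⟩, rfl⟩
    intro M2' hM2' hdom
    apply hopt (M1 ∪ σ '' M2') ((hAS _).mpr ⟨M2', hM2', rfl⟩)
    obtain ⟨l, h1, h2⟩ := hdom
    exact ⟨l, by rw [hcost, hcost]; exact h1,
      fun l' hl' => by rw [hcost, hcost]; exact h2 l' hl'⟩
  · rintro ⟨M2, ⟨hM2, hopt⟩, rfl⟩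
    refine ⟨(hAS _).mpr ⟨M2, hM2, rfl⟩, ?_⟩
    intro M' hM' hdom
    obtain ⟨M2', hM2', rfl⟩ := (hAS _).mp hM'
    apply hopt M2' hM2'
    obtain ⟨l, h1, h2⟩ := hdom
    rw [hcost, hcost] at h1
    exact ⟨l, h1, fun l' hl' => by have := h2 l' hl'; rwa [hcost, hcost] at this⟩
end

section
/- If the last component program P_n of an ASP^ω(Q) program is plain, then Algorithm 1 (the rewriting via col_1–col_5) yields an equi-coherent quantifier-alternating plain ASP(Q) program with at most n quantifiers; in general for arbitrary ASP^ω(Q) programs it yields one with at most n+1 quantifiers. Abstractly: any word over {∃,∀} of length n, where each letter may carry a 'weak' mark, can be rewritten by the operations (i) merge two adjacent equal unmarked letters into one, and (ii) replace a marked letter Q (followed only by an alternating suffix of unmarked letters) by the unmarked letter Q followed—only if Q ended the word—by one extra letter of the opposite kind, into an alternating unmarked word of length at most n+1, and of length at most n when the last letter is unmarked; moreover the process terminates. -/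
/-- A quantifier letter: first component is the quantifier (`true` = ∃,
`false` = ∀), second component is the mark (`true` = carries weak
constraints, `false` = plain). -/
abbrev QLetter := Bool × Bool

/-- A quantifier prefix. -/
abbrev QWord := List QLetter

/-- The word is quantifier-alternating. -/
def QAlt (w : QWord) : Prop := w.Chain' (fun a b => a.1 ≠ b.1)

/-- All letters of the word are unmarked (plain). -/
def QPlain (w : QWord) : Prop := ∀ x ∈ w, x.2 = false

/-- One rewriting step of Algorithm 1, abstracted:
(i) merge two adjacent equal unmarked letters;
(ii) unmark a marked letter followed by a nonempty alternating unmarked suffix;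
(iii) unmark a marked letter ending the word, appending one extra letter of the
opposite kind. -/
inductive QStep : QWord → QWord → Prop
  | merge (u v : QWord) (q : Bool) :
      QStep (u ++ (q, false) :: (q, false) :: v) (u ++ (q, false) :: v)
  | unmark (u v : QWord) (q : Bool) (hne : v ≠ []) (halt : QAlt v) (hpl : QPlain v) :
      QStep (u ++ (q, true) :: v) (u ++ (q, false) :: v)
  | unmarkLast (u : QWord) (q : Bool) :
      QStep (u ++ [(q, true)]) (u ++ [(q, false), (!q, false)])

/-- Termination measure. -/
def qmu (w : QWord) : ℕ := w.length + 2 * w.countP (fun x => x.2)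

lemma qstep_mu {w w' : QWord} (h : QStep w w') : qmu w' < qmu w := by
  cases h <;> (simp [qmu, List.countP_append, List.countP_cons]; try omega)

lemma qstep_cons {v v' : QWord} (a : QLetter) (h : QStep v v') :
    QStep (a :: v) (a :: v') := by
  cases h with
  | merge u w q => exact QStep.merge (a :: u) w q
  | unmark u w q hne halt hpl => exact QStep.unmark (a :: u) w q hne halt hpl
  | unmarkLast u q => exact QStep.unmarkLast (a :: u) q

lemma rtg_cons {v v' : QWord} (a : QLetter)
    (h : Relation.ReflTransGen QStep v v') :
    Relation.ReflTransGen QStep (a :: v) (a :: v') := by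
  induction h with
  | refl => exact Relation.ReflTransGen.refl
  | tail _ hstep ih => exact ih.tail (qstep_cons a hstep)

/-- Normalize one letter against an already alternating plain word. -/
def norm1 (l : QLetter) (v : QWord) : QWord :=
  match v with
  | [] => if l.2 then [(l.1, false), (!l.1, false)] else [(l.1, false)]
  | (p, b) :: v' => if p = l.1 then (p, b) :: v' else (l.1, false) :: (p, b) :: v'

def qnorm (w : QWord) : QWord := w.foldr norm1 []

lemma norm1_ne_nil (l : QLetter) (v : QWord) : norm1 l v ≠ [] := by
  match v with
  | [] => by_cases h : l.2 <;> simp [norm1, h]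
  | (p, b) :: v' => by_cases h : p = l.1 <;> simp [norm1, h]

lemma norm1_alt (l : QLetter) (v : QWord) (halt : QAlt v) : QAlt (norm1 l v) := by
  match v with
  | [] =>
      by_cases h : l.2 <;> simp [norm1, h, QAlt, List.Chain']
  | (p, b) :: v' =>
      by_cases h : p = l.1
      · simpa [norm1, h] using halt
      · have h' : (l.1 : Bool) ≠ p := fun hh => h hh.symm
        simp only [norm1, if_neg h]
        exact List.isChain_cons_cons.2 ⟨h', halt⟩

lemma norm1_plain (l : QLetter) (v : QWord) (hpl : QPlain v) : QPlain (norm1 l v) := by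
  match v with
  | [] =>
      intro x hx
      by_cases h : l.2
      · simp [norm1, h] at hx
        rcases hx with hx | hx <;> simp [hx]
      · simp [norm1, h] at hx
        simp [hx]
  | (p, b) :: v' =>
      intro x hx
      by_cases h : p = l.1
      · exact hpl x (by simpa [norm1, h] using hx)
      · simp [norm1, h] at hx
        rcases hx with hx | hx
        · simp [hx]
        · exact hpl x (by simpa using hx)

lemma norm1_steps (l : QLetter) (v : QWord) (halt : QAlt v) (hpl : QPlain v) :
    Relation.ReflTransGen QStep (l :: v) (norm1 l v) := by
  obtain ⟨q, m⟩ := l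
  match v with
  | [] =>
      cases m with
      | false =>
          simp only [norm1]
          exact Relation.ReflTransGen.refl
      | true =>
          refine Relation.ReflTransGen.single ?_
          simpa [norm1] using QStep.unmarkLast [] q
  | (p, b) :: v' =>
      have hb : b = false := hpl (p, b) (by simp)
      subst hb
      cases m with
      | false =>
          by_cases h : p = q
          · subst h
            refine Relation.ReflTransGen.single ?_
            simpa [norm1] using QStep.merge [] v' p
          · simp only [norm1, if_neg h]
            exact Relation.ReflTransGen.refl
      | true =>
          have h1 : QStep ((q, true) :: (p, false) :: v') ((q, false) :: (p, false) :: v') := by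
            simpa using QStep.unmark [] ((p, false) :: v') q (by simp) halt hpl
          by_cases h : p = q
          · subst h
            have h2 : QStep ((p, false) :: (p, false) :: v') ((p, false) :: v') := by
              simpa using QStep.merge [] v' p
            simpa [norm1] using (Relation.ReflTransGen.single h1).tail h2
          · simpa [norm1, h] using Relation.ReflTransGen.single h1

lemma norm1_len (l : QLetter) (v : QWord) :
    (norm1 l v).length ≤ v.length + (if l.2 then 2 else 1) := by
  match v with
  | [] => by_cases h : l.2 <;> simp [norm1, h]
  | (p, b) :: v' => by_cases h : p = l.1 <;> by_cases h2 : l.2 <;> simp [norm1, h, h2]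

lemma qnorm_spec (w : QWord) :
    QAlt (qnorm w) ∧ QPlain (qnorm w) ∧
    Relation.ReflTransGen QStep w (qnorm w) ∧
    (qnorm w).length ≤ w.length + 1 ∧
    (∀ x : QLetter, w.getLast? = some x → x.2 = false →
      (qnorm w).length ≤ w.length) := by
  induction w with
  | nil =>
      refine ⟨by simp [QAlt, qnorm, List.Chain'], by simp [QPlain, qnorm], .refl, by simp [qnorm], ?_⟩
      intro x hx
      simp at hx
  | cons a w ih =>
      obtain ⟨halt, hpl, hrtg, hlen, hlast⟩ := ih
      have hq : qnorm (a :: w) = norm1 a (qnorm w) := rfl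
      refine ⟨hq ▸ norm1_alt a _ halt, hq ▸ norm1_plain a _ hpl, ?_, ?_, ?_⟩
      · exact hq ▸ (rtg_cons a hrtg).trans (norm1_steps a _ halt hpl)
      · rw [hq]
        simp only [List.length_cons]
        match w with
        | [] => by_cases h : a.2 <;> simp [qnorm, norm1, h]
        | b :: w' =>
            have hne : qnorm (b :: w') ≠ [] := norm1_ne_nil b (qnorm w')
            obtain ⟨hd, v', hv⟩ := List.exists_cons_of_ne_nil hne
            have h2 : (norm1 a (hd :: v')).length ≤ v'.length + 2 := by
              obtain ⟨p, c⟩ := hd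
              by_cases hpq : p = a.1 <;> simp [norm1, hpq]
            rw [hv] at hlen ⊢
            simp only [List.length_cons] at *
            omega
      · intro x hx hx2
        rw [hq]
        have hn1 := norm1_len a (qnorm w)
        match w with
        | [] =>
            simp at hx
            subst hx
            simp [hx2] at hn1
            simpa [qnorm] using hn1
        | b :: w' =>
            have hx' : (b :: w').getLast? = some x := by
              rw [← hx]; simp [List.getLast?_cons_cons]
            have h3 : (qnorm (b :: w')).length ≤ (b :: w').length := hlast x hx' hx2
            by_cases h : a.2 <;> simp [h] at hn1
            · have hne : qnorm (b :: w') ≠ [] := norm1_ne_nil b (qnorm w')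
              obtain ⟨hd, v', hv⟩ := List.exists_cons_of_ne_nil hne
              have h2 : (norm1 a (hd :: v')).length ≤ v'.length + 2 := by
                obtain ⟨p, c⟩ := hd
                by_cases hpq : p = a.1 <;> simp [norm1, hpq]
              rw [hv] at h3 ⊢
              simp only [List.length_cons] at *
              omega
            · simp only [List.length_cons] at *
              omega

/-- Convergence of the rewriting: the rewriting terminates, and every word of
length `n` rewrites to an alternating unmarked word of length at most `n + 1`,
and of length at most `n` whenever its last letter is unmarked. -/
theorem qword_rewriting_convergence :
    (∀ f : ℕ → QWord, ¬ ∀ n : ℕ, QStep (f n) (f (n + 1))) ∧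
    (∀ w : QWord, ∃ w' : QWord,
      Relation.ReflTransGen QStep w w' ∧ QAlt w' ∧ QPlain w' ∧
      w'.length ≤ w.length + 1 ∧
      (∀ x : QLetter, w.getLast? = some x → x.2 = false →
        w'.length ≤ w.length)) := by
  constructor
  · intro f hf
    have hdec : ∀ n : ℕ, qmu (f n) + n ≤ qmu (f 0) := by
      intro n
      induction n with
      | zero => simp
      | succ n ihn =>
          have := qstep_mu (hf n)
          omega
    have := hdec (qmu (f 0) + 1)
    omega
  · intro w
    obtain ⟨h1, h2, h3, h4, h5⟩ := qnorm_spec w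
    exact ⟨qnorm w, h3, h1, h2, h4, h5⟩
end
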